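/- Let I be a radical t-ideal of a PVMD R, let {P_α} be the set of all minimal prime ideals of I, and assume that the intersection ⋂ P_α is irredundant (no P_α may be omitted from the intersection). Then I⁻¹ is a subring of the quotient field K if and only if P_α is not t-invertible for each α. -/

import Mathlib

/-!
Common definitions: star operations (`v`- and `t`-closure), `t`-ideals, `t`-invertibility,
PVMDs, overrings, `t`-linked and `t`-flat overrings, localizations inside the quotient
field, Nagata and Kaplansky transforms, endomorphism rings of ideals.
-/

open scoped Classical

namespace PVMDPaper

noncomputable section

section Generic

variable (A : Type*) [CommRing A] (K : Type*) [Field K] [Algebra A K]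

/-- The image of an integral ideal of `A` inside the field `K`, as an `A`-submodule of `K`. -/
def toK (I : Ideal A) : Submodule A K := Submodule.map (Algebra.linearMap A K) I

variable {A K}

/-- The dual `I⁻¹ = (A : I) = {x ∈ K : x I ⊆ A}` of a submodule of `K`. -/
def dual (I : Submodule A K) : Submodule A K := 1 / I

/-- The `v`-closure `I_v = (I⁻¹)⁻¹`. -/
def vOp (I : Submodule A K) : Submodule A K := 1 / (1 / I)

/-- The `t`-closure `I_t`: the union of `J_v` where `J` ranges over the nonzero finitely
generated submodules `J ≤ I` (the union of this directed family is its supremum). -/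
def tOp (I : Submodule A K) : Submodule A K :=
  sSup {V | ∃ J : Submodule A K, J ≠ ⊥ ∧ J.FG ∧ J ≤ I ∧ V = vOp J}

variable (K)

/-- An (integral) ideal `I` of `A` is a `t`-ideal if `I = I_t`. -/
def IsTIdeal (I : Ideal A) : Prop := tOp (toK A K I) = toK A K I

/-- An ideal `I` is `t`-invertible if `(I I⁻¹)_t = A`. -/
def IsTInvertible (I : Ideal A) : Prop := tOp (toK A K I * dual (toK A K I)) = 1

/-- A `t`-maximal ideal: an ideal maximal in the set of proper integral `t`-ideals. -/
def IsTMaximal (M : Ideal A) : Prop :=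
  M ≠ ⊤ ∧ IsTIdeal K M ∧ ∀ J : Ideal A, J ≠ ⊤ → IsTIdeal K J → M ≤ J → J = M

variable (A)

/-- `A` is a Prüfer `v`-multiplication domain: every nonzero finitely generated ideal
is `t`-invertible. -/
def IsPVMD : Prop := ∀ I : Ideal A, I ≠ ⊥ → I.FG → IsTInvertible K I

/-- `Spec_t(A)` is Noetherian: the ascending chain condition on radical `t`-ideals. -/
def TSpecNoetherian : Prop :=
  ∀ f : ℕ →o Ideal A, (∀ n, IsTIdeal K (f n) ∧ (f n).radical = f n) →
    ∃ n, ∀ m, n ≤ m → f m = f n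

variable {A K}

/-- A submodule of `K` is a subring of `K` iff it contains `1` and is closed under
multiplication (being an additive subgroup already). -/
def IsSubringOf (S : Submodule A K) : Prop :=
  (1 : K) ∈ S ∧ ∀ x ∈ S, ∀ y ∈ S, x * y ∈ S

variable (K)

/-- The localization `A_P = {a/s : a ∈ A, s ∈ A ∖ P}` viewed as a subset of `K`. -/
def loc (P : Ideal A) : Set K :=
  {x | ∃ a s : A, s ∉ P ∧ x * algebraMap A K s = algebraMap A K a}

/-- The set `J A_P = {a/s : a ∈ J, s ∈ A ∖ P} ⊆ K`. -/
def locIdealAt (J P : Ideal A) : Set K :=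
  {x | ∃ a ∈ J, ∃ s : A, s ∉ P ∧ x * algebraMap A K s = algebraMap A K a}

/-- `Z(A, I)`: the set of zero divisors on `A/I`. -/
def ZSet (I : Ideal A) : Set A := {x | ∃ a : A, a ∉ I ∧ x * a ∈ I}

/-- `Q` is a maximal prime ideal of `Z(A,I)`: a prime contained in `Z(A,I)`, maximal
(under inclusion) among the primes contained in `Z(A,I)`. -/
def MaxPrimeOfZ (I Q : Ideal A) : Prop :=
  Q.IsPrime ∧ (Q : Set A) ⊆ ZSet I ∧
    ∀ Q' : Ideal A, Q'.IsPrime → (Q' : Set A) ⊆ ZSet I → Q ≤ Q' → Q' = Q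

end Generic

section Overring

variable {R : Type*} [CommRing R] [IsDomain R]
variable {K : Type*} [Field K] [Algebra R K] [IsFractionRing R K]

/-- The extension `IT` of an ideal `I` of `R` to an overring `T`, as a `T`-submodule of `K`. -/
def extendI (I : Ideal R) (T : Subalgebra R K) : Submodule T K :=
  Submodule.span T (algebraMap R K '' (I : Set R))

/-- The extension `IT` of an `R`-submodule `I` of `K` to an overring `T`. -/
def extendS (I : Submodule R K) (T : Subalgebra R K) : Submodule T K :=
  Submodule.span T (I : Set K)

/-- An overring `T` of `R` is `t`-linked over `R` if `(IT)⁻¹ = T` for each finitely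
generated ideal `I` of `R` with `I⁻¹ = R`. -/
def IsTLinked (T : Subalgebra R K) : Prop :=
  ∀ I : Ideal R, I.FG → dual (toK R K I) = 1 → dual (extendI I T) = 1

/-- An overring `T` of `R` is `t`-flat over `R` if `T_M = R_{M ∩ R}` for each
`t`-maximal ideal `M` of `T`. -/
def IsTFlat (T : Subalgebra R K) : Prop :=
  ∀ M : Ideal T, IsTMaximal K M → loc K M = loc K (M.comap (algebraMap R T))

variable (R K)

/-- `R` is a `tQR`-domain: a PVMD all of whose `t`-linked overrings are localizations
of `R` at multiplicative sets. -/
def IsTQR : Prop :=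
  IsPVMD R K ∧ ∀ T : Subalgebra R K, IsTLinked T → ∃ S : Submonoid R,
    (T : Set K) = {x | ∃ a : R, ∃ s ∈ S, x * algebraMap R K s = algebraMap R K a}

variable {R K}
variable (K)

/-- The endomorphism ring `(I : I) = {x ∈ K : x I ⊆ I}` of an ideal `I`, as an
overring of `R`. -/
def endoRing (I : Ideal R) : Subalgebra R K where
  carrier := {x : K | ∀ y ∈ toK R K I, x * y ∈ toK R K I}
  mul_mem' := by
    intro a b ha hb y hy
    rw [mul_assoc]
    exact ha _ (hb _ hy)
  one_mem' := by
    intro y hy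
    rwa [one_mul]
  add_mem' := by
    intro a b ha hb y hy
    rw [add_mul]
    exact Submodule.add_mem _ (ha y hy) (hb y hy)
  zero_mem' := by
    intro y hy
    rw [zero_mul]
    exact Submodule.zero_mem _
  algebraMap_mem' := by
    intro r y hy
    rw [← Algebra.smul_def]
    exact Submodule.smul_mem _ r hy

set_option synthInstance.maxHeartbeats 400000 in
/-- The ideal `I`, viewed as an ideal of its endomorphism ring `(I : I)`. -/
def idealInEndo (I : Ideal R) : Ideal (endoRing K I) where
  carrier := {x | (x : K) ∈ toK R K I}
  add_mem' := by
    intro a b ha hb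
    simp only [Set.mem_setOf_eq] at *
    rw [AddMemClass.coe_add]
    exact Submodule.add_mem _ ha hb
  zero_mem' := by
    simp only [Set.mem_setOf_eq, ZeroMemClass.coe_zero]
    exact Submodule.zero_mem _
  smul_mem' := by
    intro c x hx
    simp only [Set.mem_setOf_eq] at *
    rw [smul_eq_mul, MulMemClass.coe_mul]
    exact c.2 _ hx

/-- The Kaplansky transform `Ω(I) = {u ∈ K : ∀ a ∈ I, ∃ n ≥ 1, u aⁿ ∈ R}`, as an
overring of `R`. -/
def kaplansky (I : Ideal R) : Subalgebra R K where
  carrier := {u : K | ∀ a ∈ I, ∃ n : ℕ, 0 < n ∧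
    ∃ r : R, u * (algebraMap R K a) ^ n = algebraMap R K r}
  mul_mem' := by
    intro u v hu hv a ha
    obtain ⟨n, hn, r, hr⟩ := hu a ha
    obtain ⟨m, hm, s, hs⟩ := hv a ha
    refine ⟨n + m, by omega, r * s, ?_⟩
    rw [map_mul, ← hr, ← hs, pow_add]
    ring
  one_mem' := by
    intro a ha
    exact ⟨1, one_pos, a, by rw [pow_one, one_mul]⟩
  add_mem' := by
    intro u v hu hv a ha
    obtain ⟨n, hn, r, hr⟩ := hu a ha
    obtain ⟨m, hm, s, hs⟩ := hv a ha
    refine ⟨n + m, by omega, r * a ^ m + s * a ^ n, ?_⟩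
    rw [map_add, map_mul, map_mul, map_pow, map_pow, ← hr, ← hs, pow_add, add_mul]
    ring
  zero_mem' := by
    intro a ha
    exact ⟨1, one_pos, 0, by rw [map_zero, zero_mul]⟩
  algebraMap_mem' := by
    intro r a ha
    exact ⟨1, one_pos, r * a, by rw [map_mul, pow_one]⟩

/-- The Nagata (ideal) transform `T(I) = ⋃_{n ≥ 1} (R : Iⁿ)`, as an overring of `R`. -/
def nagata (I : Ideal R) : Subalgebra R K where
  carrier := {x : K | ∃ n : ℕ, ∀ y ∈ I ^ (n + 1),
    ∃ r : R, x * algebraMap R K y = algebraMap R K r}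
  mul_mem' := by
    intro x x' hx hx'
    obtain ⟨n, hn⟩ := hx
    obtain ⟨m, hm⟩ := hx'
    refine ⟨n + m + 1, fun y hy => ?_⟩
    rw [show n + m + 1 + 1 = (n + 1) + (m + 1) by omega, pow_add] at hy
    refine Submodule.mul_induction_on hy ?_ ?_
    · intro a ha b hb
      obtain ⟨r, hr⟩ := hn a ha
      obtain ⟨s, hs⟩ := hm b hb
      refine ⟨r * s, ?_⟩
      rw [map_mul, map_mul, ← hr, ← hs]
      ring
    · rintro y1 y2 ⟨r1, h1⟩ ⟨r2, h2⟩
      exact ⟨r1 + r2, by rw [map_add, map_add, mul_add, h1, h2]⟩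
  one_mem' := ⟨0, fun y _ => ⟨y, by rw [one_mul]⟩⟩
  add_mem' := by
    intro x x' hx hx'
    obtain ⟨n, hn⟩ := hx
    obtain ⟨m, hm⟩ := hx'
    refine ⟨n + m + 1, fun y hy => ?_⟩
    have h1 : y ∈ I ^ (n + 1) := Ideal.pow_le_pow_right (by omega) hy
    have h2 : y ∈ I ^ (m + 1) := Ideal.pow_le_pow_right (by omega) hy
    obtain ⟨r, hr⟩ := hn y h1
    obtain ⟨s, hs⟩ := hm y h2
    exact ⟨r + s, by rw [map_add, add_mul, hr, hs]⟩
  zero_mem' := ⟨0, fun y _ => ⟨0, by rw [map_zero, zero_mul]⟩⟩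
  algebraMap_mem' := by
    intro r
    exact ⟨0, fun y _ => ⟨r * y, by rw [map_mul]⟩⟩

end Overring

section Statements

variable {R : Type*} [CommRing R] [IsDomain R]
variable {K : Type*} [Field K] [Algebra R K] [IsFractionRing R K]

section Aux

set_option linter.unusedSectionVars false
set_option linter.unusedVariables false

open Submodule

variable {R : Type*} [CommRing R] [IsDomain R]
variable {K : Type*} [Field K] [Algebra R K] [IsFractionRing R K]

lemma mem_dual' {M : Submodule R K} {x : K} :
    x ∈ dual M ↔ ∀ y ∈ M, x * y ∈ (1 : Submodule R K) :=
  Submodule.mem_div_iff_forall_mul_mem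

lemma one_mem_one' : (1 : K) ∈ (1 : Submodule R K) := Submodule.mem_one.2 ⟨1, map_one _⟩

lemma mul_mem_one' {x y : K} (hx : x ∈ (1 : Submodule R K)) (hy : y ∈ (1 : Submodule R K)) :
    x * y ∈ (1 : Submodule R K) := by
  obtain ⟨a, rfl⟩ := Submodule.mem_one.1 hx
  obtain ⟨b, rfl⟩ := Submodule.mem_one.1 hy
  exact Submodule.mem_one.2 ⟨a * b, map_mul _ _ _⟩

lemma dual_anti {M N : Submodule R K} (h : M ≤ N) : dual N ≤ dual M := fun x hx =>
  mem_dual'.2 fun y hy => mem_dual'.1 hx y (h hy)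

lemma le_vOp' (M : Submodule R K) : M ≤ vOp M := fun x hx =>
  mem_dual'.2 fun y hy => by rw [mul_comm]; exact mem_dual'.1 hy x hx

lemma vOp_mono {M N : Submodule R K} (h : M ≤ N) : vOp M ≤ vOp N :=
  dual_anti (dual_anti h)

lemma dual_vOp (M : Submodule R K) : dual (vOp M) = dual M :=
  le_antisymm (dual_anti (le_vOp' M)) (le_vOp' (dual M))

lemma vOp_idem (M : Submodule R K) : vOp (vOp M) = vOp M := by
  show dual (dual (vOp M)) = vOp M
  rw [dual_vOp]; rfl

lemma dual_one' : dual (1 : Submodule R K) = 1 := by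
  apply le_antisymm
  · intro x hx
    have := mem_dual'.1 hx 1 one_mem_one'
    rwa [mul_one] at this
  · intro x hx
    exact mem_dual'.2 fun y hy => mul_mem_one' hx hy

lemma vOp_one : vOp (1 : Submodule R K) = 1 := by
  show dual (dual (1 : Submodule R K)) = 1
  rw [dual_one', dual_one']

lemma mul_dual_le_one (M : Submodule R K) : M * dual M ≤ 1 :=
  Submodule.mul_le.2 fun m hm x hx => by rw [mul_comm]; exact mem_dual'.1 hx m hm

lemma mul_vOp_le (A M : Submodule R K) : A * vOp M ≤ vOp (A * M) := by
  refine Submodule.mul_le.2 fun a ha y hy => ?_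
  refine mem_dual'.2 fun z hz => ?_
  have hza : z * a ∈ dual M := mem_dual'.2 fun m hm => by
    have := mem_dual'.1 hz (a * m) (Submodule.mul_mem_mul ha hm)
    rwa [show z * (a * m) = z * a * m by ring] at this
  have := mem_dual'.1 hy (z * a) hza
  rwa [show y * (z * a) = a * y * z by ring] at this

lemma vOp_mul_vOp (A M : Submodule R K) : vOp (A * vOp M) = vOp (A * M) := by
  apply le_antisymm
  · have := vOp_mono (mul_vOp_le A M)
    rwa [vOp_idem] at this
  · exact vOp_mono (mul_le_mul' le_rfl (le_vOp' M))

lemma vOp_mul_vOp_le (X Y : Submodule R K) : vOp X * vOp Y ≤ vOp (X * Y) := by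
  calc vOp X * vOp Y = vOp Y * vOp X := mul_comm _ _
    _ ≤ vOp (vOp Y * X) := mul_vOp_le (vOp Y) X
    _ = vOp (X * vOp Y) := by rw [mul_comm]
    _ = vOp (X * Y) := vOp_mul_vOp X Y

lemma vOp_pow_le (M : Submodule R K) (n : ℕ) : (vOp M) ^ n ≤ vOp (M ^ n) := by
  induction n with
  | zero => simp [vOp_one.symm.le]
  | succ k ih =>
      rw [pow_succ, pow_succ]
      exact (mul_le_mul' ih le_rfl).trans
        ((vOp_mul_vOp_le (M ^ k) M))

lemma vOp_pow_eq_one {M : Submodule R K} (h : vOp M = 1) (n : ℕ) : vOp (M ^ n) = 1 := by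
  induction n with
  | zero => simpa using vOp_one
  | succ k ih =>
      rw [pow_succ, ← vOp_mul_vOp, h, mul_one, ih]

lemma spanK_mul_spanK (c d : K) : span R {c} * span R {d} = span R {c * d} := by
  rw [Submodule.span_mul_span, Set.singleton_mul_singleton]

lemma spanK_pow (c : K) (n : ℕ) : (span R {c}) ^ n = span R {c ^ n} := by
  induction n with
  | zero => rw [pow_zero, pow_zero, Submodule.one_eq_span]
  | succ k ih => rw [pow_succ, pow_succ, ih, spanK_mul_spanK]

lemma dual_spanK_mul {c : K} (hc : c ≠ 0) (M : Submodule R K) :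
    dual (span R {c} * M) = span R {c⁻¹} * dual M := by
  ext x
  constructor
  · intro hx
    have hcx : c * x ∈ dual M := mem_dual'.2 fun m hm => by
      have := mem_dual'.1 hx (c * m) (Submodule.mem_span_singleton_mul.2 ⟨m, hm, rfl⟩)
      rwa [show x * (c * m) = c * x * m by ring] at this
    exact Submodule.mem_span_singleton_mul.2 ⟨c * x, hcx, by field_simp⟩
  · intro hx
    obtain ⟨z, hz, rfl⟩ := Submodule.mem_span_singleton_mul.1 hx
    refine mem_dual'.2 fun y hy => ?_
    obtain ⟨m, hm, rfl⟩ := Submodule.mem_span_singleton_mul.1 hy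
    have := mem_dual'.1 hz m hm
    rwa [show c⁻¹ * z * (c * m) = (c⁻¹ * c) * (z * m) by ring, inv_mul_cancel₀ hc, one_mul]

lemma vOp_spanK_mul {c : K} (hc : c ≠ 0) (M : Submodule R K) :
    vOp (span R {c} * M) = span R {c} * vOp M := by
  show dual (dual _) = _
  rw [dual_spanK_mul hc, dual_spanK_mul (inv_ne_zero hc), inv_inv]; rfl

lemma tOp_mono {M N : Submodule R K} (h : M ≤ N) : tOp M ≤ tOp N :=
  sSup_le_sSup fun V hV => by
    obtain ⟨J, h1, h2, h3, h4⟩ := hV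
    exact ⟨J, h1, h2, h3.trans h, h4⟩

lemma vOp_le_tOp {J M : Submodule R K} (h1 : J ≠ ⊥) (h2 : J.FG) (h3 : J ≤ M) :
    vOp J ≤ tOp M :=
  le_sSup ⟨J, h1, h2, h3, rfl⟩

lemma le_tOp (M : Submodule R K) : M ≤ tOp M := by
  intro x hx
  by_cases hx0 : x = 0
  · rw [hx0]; exact zero_mem _
  · refine vOp_le_tOp (J := span R {x}) ?_ (fg_span_singleton x) ?_
      (le_vOp' _ (mem_span_singleton_self x))
    · simpa [Submodule.span_singleton_eq_bot] using hx0
    · rwa [span_le, Set.singleton_subset_iff]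

lemma tOp_le_one {M : Submodule R K} (h : M ≤ 1) : tOp M ≤ 1 := by
  refine sSup_le ?_
  rintro V ⟨J, h1, h2, h3, rfl⟩
  have := vOp_mono (h3.trans h)
  rwa [vOp_one] at this

lemma exists_fg_of_tOp_eq_one {M : Submodule R K} (hM : M ≤ 1) (h : tOp M = 1) :
    ∃ J : Submodule R K, J ≠ ⊥ ∧ J.FG ∧ J ≤ M ∧ vOp J = 1 := by
  have h1 : (1 : K) ∈ tOp M := h ▸ one_mem_one'
  set s : Set (Submodule R K) :=
    {V | ∃ J : Submodule R K, J ≠ ⊥ ∧ J.FG ∧ J ≤ M ∧ V = vOp J} with hs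
  have hne : s.Nonempty := by
    rcases Set.eq_empty_or_nonempty s with he | hne
    · exfalso
      have : tOp M = ⊥ := by
        rw [tOp, ← hs, he, sSup_empty]
      rw [this] at h1
      simpa using h1
    · exact hne
  have hdir : DirectedOn (· ≤ ·) s := by
    rintro _ ⟨J1, hb1, hf1, hle1, rfl⟩ _ ⟨J2, hb2, hf2, hle2, rfl⟩
    refine ⟨vOp (J1 ⊔ J2), ⟨J1 ⊔ J2, ?_, hf1.sup hf2, sup_le hle1 hle2, rfl⟩,
      vOp_mono le_sup_left, vOp_mono le_sup_right⟩
    intro hb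
    exact hb1 (le_bot_iff.1 (hb ▸ le_sup_left))
  have h1' : (1 : K) ∈ sSup s := h1
  obtain ⟨V, hVs, hxV⟩ := (Submodule.mem_sSup_of_directed hne hdir).1 h1'
  obtain ⟨J, hb, hf, hle, rfl⟩ := hVs
  refine ⟨J, hb, hf, hle, ?_⟩
  have hd1 : dual J ≤ 1 := fun z hz => by
    have := mem_dual'.1 hxV z hz
    rwa [one_mul] at this
  have h1d : (1 : Submodule R K) ≤ dual J := fun x hx =>
    mem_dual'.2 fun y hy => mul_mem_one' hx (hM (hle hy))
  show dual (dual J) = 1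
  rw [le_antisymm hd1 h1d, dual_one']

lemma mem_toK' {I : Ideal R} {x : K} :
    x ∈ toK R K I ↔ ∃ i ∈ I, algebraMap R K i = x := by
  simp [toK, Submodule.mem_map, Algebra.linearMap_apply]

lemma algebraMap_mem_toK_iff {I : Ideal R} {r : R} :
    algebraMap R K r ∈ toK R K I ↔ r ∈ I := by
  constructor
  · intro h
    obtain ⟨i, hi, he⟩ := mem_toK'.1 h
    rwa [← IsFractionRing.injective R K he]
  · intro h
    exact mem_toK'.2 ⟨r, h, rfl⟩

lemma toK_le_one (I : Ideal R) : toK R K I ≤ 1 := by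
  intro x hx
  obtain ⟨i, _, rfl⟩ := mem_toK'.1 hx
  exact Submodule.mem_one.2 ⟨i, rfl⟩

lemma toK_mono {I J : Ideal R} (h : I ≤ J) : toK R K I ≤ toK R K J :=
  Submodule.map_mono h

lemma toK_mul (I J : Ideal R) : toK R K (I * J) = toK R K I * toK R K J :=
  Submodule.map_mul I J (Algebra.ofId R K)

lemma toK_pow (I : Ideal R) (n : ℕ) : toK R K (I ^ n) = (toK R K I) ^ n :=
  Submodule.map_pow I (Algebra.ofId R K) n

lemma toK_span_singleton (r : R) :
    toK R K (Ideal.span {r}) = span R {algebraMap R K r} := by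
  rw [toK, Ideal.span, Submodule.map_span]
  simp

lemma toK_eq_bot_iff {I : Ideal R} : toK R K I = ⊥ ↔ I = ⊥ := by
  constructor
  · intro h
    rw [eq_bot_iff]
    intro r hr
    have : algebraMap R K r ∈ toK R K I := algebraMap_mem_toK_iff.2 hr
    rw [h, Submodule.mem_bot] at this
    have : r = 0 := by
      apply IsFractionRing.injective R K
      rw [this, map_zero]
    simpa [this]
  · rintro rfl
    exact Submodule.map_bot _

lemma pow_ne_bot {C : Ideal R} (hC : C ≠ ⊥) (n : ℕ) : C ^ n ≠ ⊥ := by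
  induction n with
  | zero => rw [pow_zero, Ideal.one_eq_top]; exact top_ne_bot
  | succ k ih =>
      rw [pow_succ]
      intro h
      rcases Ideal.mul_eq_bot.1 h with h | h
      · exact ih h
      · exact hC h

lemma exists_pow_mem_of_minimalPrime {I P : Ideal R} (hP : P ∈ I.minimalPrimes)
    {p : R} (hp : p ∈ P) :
    ∃ (n : ℕ) (s : R), 0 < n ∧ s ∉ P ∧ s * p ^ n ∈ I := by
  have hPp : P.IsPrime := hP.1.1
  have hIP : I ≤ P := hP.1.2
  by_contra hcon
  push_neg at hcon
  set S : Submonoid R :=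
    { carrier := {x | ∃ (n : ℕ) (s : R), s ∉ P ∧ x = s * p ^ n}
      mul_mem' := by
        rintro x y ⟨n, s, hs, rfl⟩ ⟨m, t, ht, rfl⟩
        refine ⟨n + m, s * t, fun hst => ?_, by ring⟩
        rcases hPp.mem_or_mem hst with h | h
        · exact hs h
        · exact ht h
      one_mem' := ⟨0, 1, fun h1 => hPp.ne_top (Ideal.eq_top_of_isUnit_mem P h1 isUnit_one),
        by ring⟩ } with hS
  have hdisj : Disjoint (I : Set R) (S : Set R) := by
    rw [Set.disjoint_left]
    rintro x hxI ⟨n, s, hs, rfl⟩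
    rcases Nat.eq_zero_or_pos n with rfl | hn
    · rw [pow_zero, mul_one] at hxI
      exact hs (hIP hxI)
    · exact hcon n s hn hs hxI
  obtain ⟨Q, hQp, hIQ, hQdisj⟩ := Ideal.exists_le_prime_disjoint I S hdisj
  have hQP : Q ≤ P := by
    intro q hq
    by_contra hqP
    exact Set.disjoint_left.1 hQdisj hq ⟨0, q, hqP, by ring⟩
  have hPQ : P ≤ Q := hP.2 ⟨hQp, hIQ⟩ hQP
  exact Set.disjoint_left.1 hQdisj (hPQ hp) ⟨1, 1, fun h1 =>
    hPp.ne_top (Ideal.eq_top_of_isUnit_mem P h1 isUnit_one), by ring⟩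

lemma exists_mul_pow_le_of_minimalPrime {I P : Ideal R} (hP : P ∈ I.minimalPrimes)
    {C : Ideal R} (hC : C.FG) (hCP : C ≤ P) :
    ∃ (m : ℕ) (s : R), 0 < m ∧ s ∉ P ∧ Ideal.span {s} * C ^ m ≤ I := by
  have hPp : P.IsPrime := hP.1.1
  obtain ⟨T, rfl⟩ := hC
  induction T using Finset.induction_on with
  | empty =>
      refine ⟨1, 1, one_pos, fun h1 => hPp.ne_top (Ideal.eq_top_of_isUnit_mem P h1 isUnit_one), ?_⟩
      simp [Ideal.span_empty]
  | @insert a T ha ih =>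
      have hCP' : Ideal.span (T : Set R) ≤ P := by
        refine le_trans (Ideal.span_mono ?_) hCP
        intro x hx
        simp only [Finset.coe_insert]
        exact Set.mem_insert_iff.2 (Or.inr hx)
      have haP : a ∈ P := hCP (Ideal.subset_span (by simp))
      obtain ⟨m', s', hm', hs', hIH⟩ := ih hCP'
      obtain ⟨n, s, hn, hs, hsp⟩ := exists_pow_mem_of_minimalPrime hP haP
      refine ⟨n + m', s * s', by omega, fun h => ?_, ?_⟩
      · rcases hPp.mem_or_mem h with h | h
        · exact hs h
        · exact hs' h
      · have hsplit : Ideal.span (insert a (T : Set R)) ^ (n + m') ≤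
            Ideal.span {a} ^ n ⊔ Ideal.span (T : Set R) ^ m' := by
          rw [Ideal.span_insert]
          exact Ideal.sup_pow_add_le_pow_sup_pow
        have h2 : Ideal.span (insert a ↑T) = Ideal.span ((insert a T : Finset R) : Set R) := by
          simp
        calc Ideal.span {s * s'} * Ideal.span ((insert a T : Finset R) : Set R) ^ (n + m')
            ≤ Ideal.span {s * s'} * (Ideal.span {a} ^ n ⊔ Ideal.span (T : Set R) ^ m') := by
              rw [← h2]
              exact Ideal.mul_mono_right hsplit
          _ ≤ I := by
              rw [Ideal.mul_sup]
              refine sup_le ?_ ?_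
              · rw [Ideal.span_singleton_pow, Ideal.span_singleton_mul_span_singleton]
                rw [Ideal.span_singleton_le_iff_mem]
                have : s * s' * a ^ n = s' * (s * a ^ n) := by ring
                rw [this]
                exact I.mul_mem_left s' hsp
              · have : Ideal.span {s * s'} = Ideal.span {s} * Ideal.span {s'} := by
                  rw [Ideal.span_singleton_mul_span_singleton]
                rw [this, mul_assoc]
                exact le_trans Ideal.mul_le_right hIH

lemma linearMap_injective : Function.Injective ⇑(Algebra.linearMap R K) := by
  intro x y h
  exact IsFractionRing.injective R K h

lemma comap_toK_of_le_one {J : Submodule R K} (hJ : J ≤ 1) :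
    toK R K (J.comap (Algebra.linearMap R K)) = J := by
  rw [toK, Submodule.map_comap_eq, inf_eq_right.2]
  rwa [← Submodule.one_eq_range]

lemma span_s_fg (s : R) : (Ideal.span ({s} : Set R)).FG := ⟨{s}, by simp⟩

lemma tIdeal_of_minimalPrime {I P : Ideal R} (htI : IsTIdeal K I)
    (hP : P ∈ I.minimalPrimes) : IsTIdeal K P := by
  have hPp : P.IsPrime := hP.1.1
  have hIP : I ≤ P := hP.1.2
  refine le_antisymm ?_ (le_tOp _)
  refine sSup_le ?_
  rintro V ⟨J, hJb, hJfg, hJle, rfl⟩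
  have hJ1 : J ≤ 1 := hJle.trans (toK_le_one P)
  set C : Ideal R := J.comap (Algebra.linearMap R K) with hC
  have hCJ : toK R K C = J := comap_toK_of_le_one hJ1
  have hCfg : C.FG := Submodule.fg_of_fg_map_injective (Algebra.linearMap R K)
    linearMap_injective (by show (toK R K C).FG; rw [hCJ]; exact hJfg)
  have hCP : C ≤ P := by
    intro r hr
    have hrJ : algebraMap R K r ∈ J := hr
    exact algebraMap_mem_toK_iff.1 (hJle hrJ)
  have hCb : C ≠ ⊥ := fun h => hJb (by rw [← hCJ, h, toK, Submodule.map_bot])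
  obtain ⟨m, s, hm, hs, hL3⟩ := exists_mul_pow_le_of_minimalPrime hP hCfg hCP
  intro x hx
  have hx1 : x ∈ (1 : Submodule R K) := by
    have := vOp_mono hJ1 hx
    rwa [vOp_one] at this
  obtain ⟨x₀, hx₀⟩ := Submodule.mem_one.1 hx1
  have hxm : x ^ m ∈ vOp (J ^ m) := vOp_pow_le J m (Submodule.pow_mem_pow _ hx m)
  have hsx : algebraMap R K s * x ^ m ∈ span R {algebraMap R K s} * vOp (J ^ m) :=
    Submodule.mul_mem_mul (Submodule.mem_span_singleton_self _) hxm
  have hEq : span R {algebraMap R K s} * J ^ m = toK R K (Ideal.span {s} * C ^ m) := by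
    rw [toK_mul, toK_span_singleton, toK_pow, hCJ]
  have key : span R {algebraMap R K s} * vOp (J ^ m) ≤
      vOp (toK R K (Ideal.span {s} * C ^ m)) := by
    rw [← hEq]
    exact mul_vOp_le _ _
  have hD : vOp (toK R K (Ideal.span {s} * C ^ m)) ≤ toK R K I := by
    have hDfg : (Ideal.span {s} * C ^ m).FG := Submodule.FG.mul (span_s_fg s) (Submodule.FG.pow hCfg m)
    have hDb : Ideal.span {s} * C ^ m ≠ ⊥ := by
      intro h
      rcases Ideal.mul_eq_bot.1 h with h | h
      · have hzero : s = 0 := by simpa [Ideal.span_eq_bot] using h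
        exact hs (hzero ▸ P.zero_mem)
      · exact pow_ne_bot hCb m h
    have := vOp_le_tOp (J := toK R K (Ideal.span {s} * C ^ m))
      (fun h => hDb (toK_eq_bot_iff.1 h)) (Submodule.FG.map _ hDfg) (toK_mono hL3)
    rwa [htI] at this
  have hmem : algebraMap R K s * x ^ m ∈ toK R K I := hD (key hsx)
  have hpull : s * x₀ ^ m ∈ I := by
    rw [← algebraMap_mem_toK_iff (K := K)]
    rwa [map_mul, map_pow, hx₀]
  have hxP : x₀ ∈ P := hPp.mem_of_pow_mem m ((hPp.mem_or_mem (hIP hpull)).resolve_left hs)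
  exact mem_toK'.2 ⟨x₀, hxP, hx₀⟩

lemma algebraMap_ne_zero {r : R} (hr : r ≠ 0) : algebraMap R K r ≠ 0 := fun h =>
  hr (IsFractionRing.injective R K (by rw [h, map_zero]))

lemma tInvertible_of_not_endo (hR : IsPVMD R K) (P : Ideal R) (hPp : P.IsPrime)
    {u : K} {q : R} (hu : u ∈ dual (toK R K P)) (hq : q ∈ P)
    (hout : u * algebraMap R K q ∉ toK R K P) : IsTInvertible K P := by
  have hq0 : q ≠ 0 := by
    rintro rfl
    exact hout (by rw [map_zero, mul_zero]; exact (toK R K P).zero_mem)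
  set q' : K := algebraMap R K q with hq'def
  have hq' : q' ≠ 0 := algebraMap_ne_zero hq0
  have hq'P : q' ∈ toK R K P := mem_toK'.2 ⟨q, hq, rfl⟩
  have huq : u * q' ∈ (1 : Submodule R K) := mem_dual'.1 hu q' hq'P
  obtain ⟨c, hc⟩ := Submodule.mem_one.1 huq
  have hcP : c ∉ P := fun h => hout (hc ▸ mem_toK'.2 ⟨c, h, rfl⟩)
  set E : Ideal R := Ideal.span {c, q} with hE
  have hcE : c ∈ E := Ideal.subset_span (by simp)
  have hqE : q ∈ E := Ideal.subset_span (by simp)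
  have hEfg : E.FG := ⟨{c, q}, by simp [hE]⟩
  have hEb : E ≠ ⊥ := by
    intro h
    rw [h] at hqE
    exact hq0 (by simpa using hqE)
  have hEinv := hR E hEb hEfg
  set N : Submodule R K := dual (toK R K E) with hN
  set W : Submodule R K := span R {q'} * N with hW
  have hPW : toK R K P ≤ W := by
    intro y hy
    obtain ⟨y₀, hy₀, rfl⟩ := mem_toK'.1 hy
    set y' : K := algebraMap R K y₀ with hy'def
    have hz : y' * q'⁻¹ ∈ N := by
      refine mem_dual'.2 fun w hw => ?_
      obtain ⟨e, he, rfl⟩ := mem_toK'.1 hw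
      obtain ⟨α, β, hαβ⟩ := Ideal.mem_span_pair.1 he
      have huy : u * y' ∈ (1 : Submodule R K) := mem_dual'.1 hu y' (mem_toK'.2 ⟨y₀, hy₀, rfl⟩)
      have key : y' * q'⁻¹ * algebraMap R K e = α • (u * y') + β • y' := by
        rw [← hαβ, map_add, map_mul, map_mul, Algebra.smul_def, Algebra.smul_def]
        have hcc : algebraMap R K c = u * q' := hc
        rw [hcc]
        field_simp
        ring
      rw [key]
      exact add_mem (Submodule.smul_mem _ _ huy)
        (Submodule.smul_mem _ _ (Submodule.mem_one.2 ⟨y₀, rfl⟩))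
    refine Submodule.mem_span_singleton_mul.2 ⟨y' * q'⁻¹, hz, ?_⟩
    field_simp
  have hW1 : W ≤ 1 := by
    intro w hw
    obtain ⟨z, hz, rfl⟩ := Submodule.mem_span_singleton_mul.1 hw
    have := mem_dual'.1 hz q' (mem_toK'.2 ⟨q, hqE, rfl⟩)
    rwa [mul_comm] at this
  set W' : Ideal R := W.comap (Algebra.linearMap R K) with hW'
  have hW'W : toK R K W' = W := comap_toK_of_le_one hW1
  have hdWP : dual W * toK R K P ≤ 1 := Submodule.mul_le.2 fun d hd y hy =>
    mem_dual'.1 hd y (hPW hy)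
  set G' : Ideal R := (dual W * toK R K P).comap (Algebra.linearMap R K) with hG'
  have hG'G : toK R K G' = dual W * toK R K P := comap_toK_of_le_one hdWP
  have hWG : W' * G' ≤ P := by
    refine Ideal.mul_le.2 fun r hr g hg => ?_
    have hr' : algebraMap R K r ∈ W := hr
    have hg' : algebraMap R K g ∈ dual W * toK R K P := hg
    have hmem : algebraMap R K (r * g) ∈ W * (dual W * toK R K P) := by
      rw [map_mul]
      exact Submodule.mul_mem_mul hr' hg'
    have hle : W * (dual W * toK R K P) ≤ toK R K P := by
      rw [← mul_assoc]
      exact (mul_le_mul' (mul_dual_le_one W) le_rfl).trans (le_of_eq (one_mul _))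
    exact algebraMap_mem_toK_iff.1 (hle hmem)
  have hudW : u ∈ dual W := by
    refine mem_dual'.2 fun w hw => ?_
    obtain ⟨z, hz, rfl⟩ := Submodule.mem_span_singleton_mul.1 hw
    have hcz := mem_dual'.1 hz (algebraMap R K c) (mem_toK'.2 ⟨c, hcE, rfl⟩)
    rwa [show u * (q' * z) = z * algebraMap R K c by rw [hc]; ring]
  rcases (Ideal.IsPrime.mul_le hPp).1 hWG with hWP | hGP
  · have hWle : W ≤ toK R K P := by
      intro w hw
      obtain ⟨w₀, hw₀⟩ := Submodule.mem_one.1 (hW1 hw)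
      have hw₀W : w₀ ∈ W' := by
        show algebraMap R K w₀ ∈ W
        rw [hw₀]; exact hw
      exact mem_toK'.2 ⟨w₀, hWP hw₀W, hw₀⟩
    have hPWeq : toK R K P = W := le_antisymm hPW hWle
    show tOp (toK R K P * dual (toK R K P)) = 1
    have hdW : dual W = span R {q'⁻¹} * vOp (toK R K E) := by
      rw [hW, dual_spanK_mul hq']
      rfl
    have hprod : toK R K P * dual (toK R K P) = N * vOp (toK R K E) := by
      rw [hPWeq, hdW, hW]
      calc span R {q'} * N * (span R {q'⁻¹} * vOp (toK R K E))
          = (span R {q'} * span R {q'⁻¹}) * (N * vOp (toK R K E)) := by ring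
        _ = N * vOp (toK R K E) := by
            rw [spanK_mul_spanK, mul_inv_cancel₀ hq', ← Submodule.one_eq_span, one_mul]
    rw [hprod]
    apply le_antisymm
    · exact tOp_le_one (mul_dual_le_one N)
    · have h1 : toK R K E * dual (toK R K E) ≤ N * vOp (toK R K E) := by
        rw [← hN, mul_comm (toK R K E) N]
        exact mul_le_mul' le_rfl (le_vOp' _)
      calc (1 : Submodule R K) = tOp (toK R K E * dual (toK R K E)) := hEinv.symm
        _ ≤ tOp (N * vOp (toK R K E)) := tOp_mono h1
  · exfalso
    have hmem : u * q' ∈ dual W * toK R K P := Submodule.mul_mem_mul hudW hq'P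
    rw [← hG'G] at hmem
    exact hout (toK_mono hGP hmem)

lemma exists_fg_ideal_of_mem_mul {P : Ideal R} {N : Submodule R K} {x : K}
    (hx : x ∈ toK R K P * N) :
    ∃ B : Ideal R, B.FG ∧ B ≤ P ∧ x ∈ toK R K B * N := by
  refine Submodule.mul_induction_on hx ?_ ?_
  · intro mm hm n hn
    obtain ⟨p, hp, rfl⟩ := mem_toK'.1 hm
    exact ⟨Ideal.span {p}, span_s_fg p, (Ideal.span_singleton_le_iff_mem P).2 hp,
      Submodule.mul_mem_mul (mem_toK'.2 ⟨p, Ideal.mem_span_singleton_self p, rfl⟩) hn⟩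
  · rintro x y ⟨B1, hf1, hle1, hx1⟩ ⟨B2, hf2, hle2, hx2⟩
    refine ⟨B1 ⊔ B2, Submodule.FG.sup hf1 hf2, sup_le hle1 hle2, ?_⟩
    exact add_mem ((mul_le_mul' (toK_mono le_sup_left) le_rfl) hx1)
      ((mul_le_mul' (toK_mono le_sup_right) le_rfl) hx2)

lemma fg_finsetSup {ι : Type*} (s : Finset ι) (f : ι → Ideal R)
    (h : ∀ i ∈ s, (f i).FG) : (s.sup f).FG :=
  Finset.sup_induction Submodule.fg_bot (fun a ha b hb => Submodule.FG.sup ha hb) h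

end Aux

set_option maxHeartbeats 2000000 in
/-- Let `I` be a radical `t`-ideal of a PVMD `R` whose set of minimal
primes forms an irredundant intersection. Then `I⁻¹` is a subring of `K` iff no minimal
prime of `I` is `t`-invertible. -/
theorem statement_2 (hR : IsPVMD R K) (I : Ideal R) (hbot : I ≠ ⊥) (htop : I ≠ ⊤)
    (htI : IsTIdeal K I) (hrad : I.radical = I)
    (hirr : ∀ P ∈ I.minimalPrimes, ¬ sInf (I.minimalPrimes \ {P}) ≤ P) :
    IsSubringOf (dual (toK R K I)) ↔ ∀ P ∈ I.minimalPrimes, ¬ IsTInvertible K P := by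
  constructor
  · -- If I⁻¹ is a ring then no minimal prime is t-invertible.
    intro hS P hP hTinv
    have hPp : P.IsPrime := hP.1.1
    have hIP : I ≤ P := hP.1.2
    have htP : IsTIdeal K P := tIdeal_of_minimalPrime htI hP
    obtain ⟨a, haJ, haP⟩ := SetLike.not_le_iff_exists.1 (hirr P hP)
    have ha0 : a ≠ 0 := fun h => haP (h ▸ P.zero_mem)
    set a' : K := algebraMap R K a with ha'
    set N : Submodule R K := dual (toK R K P) with hN
    have hMN1 : toK R K P * N ≤ 1 := mul_dual_le_one _
    obtain ⟨J, hJb, hJfg, hJle, hJv⟩ := exists_fg_of_tOp_eq_one hMN1 hTinv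
    obtain ⟨T, hT⟩ := hJfg
    have hTmem : ∀ x : K, x ∈ T → ∃ B : Ideal R, B.FG ∧ B ≤ P ∧ x ∈ toK R K B * N :=
      fun x hx => exists_fg_ideal_of_mem_mul (hJle (hT ▸ Submodule.subset_span hx))
    choose f hf1 hf2 hf3 using hTmem
    set B₀ : Ideal R := T.attach.sup (fun x => f x.1 x.2) with hB₀
    have hB₀fg : B₀.FG := fg_finsetSup _ _ (fun i _ => hf1 i.1 i.2)
    have hB₀P : B₀ ≤ P := Finset.sup_le fun i _ => hf2 i.1 i.2
    have hJBN : J ≤ toK R K B₀ * N := by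
      rw [← hT, Submodule.span_le]
      intro x hx
      have hle : f x hx ≤ B₀ :=
        Finset.le_sup (f := fun x : {x // x ∈ T} => f x.1 x.2) (Finset.mem_attach T ⟨x, hx⟩)
      exact (mul_le_mul' (toK_mono hle) le_rfl) (hf3 x hx)
    have hB₀b : B₀ ≠ ⊥ := by
      intro h
      rw [h] at hJBN
      rw [show toK R K (⊥ : Ideal R) = ⊥ from Submodule.map_bot _, Submodule.bot_mul, le_bot_iff] at hJBN
      exact hJb hJBN
    set B : Submodule R K := toK R K B₀ with hB
    have hBN1 : vOp (B * N) = 1 := by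
      apply le_antisymm
      · have hle1 : B * N ≤ 1 :=
          (mul_le_mul' (toK_mono hB₀P) le_rfl).trans (mul_dual_le_one _)
        have := vOp_mono hle1
        rwa [vOp_one] at this
      · rw [← hJv]
        exact vOp_mono hJBN
    obtain ⟨m, s, hm, hsP, hL3⟩ := exists_mul_pow_le_of_minimalPrime hP hB₀fg hB₀P
    have hs0 : s ≠ 0 := fun h => hsP (h ▸ P.zero_mem)
    set X : Submodule R K := Submodule.span R {a'} * N with hX
    have hXS : X ≤ dual (toK R K I) := by
      intro w hw
      obtain ⟨z, hz, rfl⟩ := Submodule.mem_span_singleton_mul.1 hw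
      refine mem_dual'.2 fun b hb => ?_
      obtain ⟨b₀, hb₀, rfl⟩ := mem_toK'.1 hb
      have habP : a * b₀ ∈ P := P.mul_mem_left a (hIP hb₀)
      have := mem_dual'.1 hz (algebraMap R K (a * b₀)) (mem_toK'.2 ⟨_, habP, rfl⟩)
      rwa [map_mul, show z * (algebraMap R K a * algebraMap R K b₀)
        = a' * z * algebraMap R K b₀ by rw [ha']; ring] at this
    have hXk : ∀ k : ℕ, X ^ (k + 1) ≤ dual (toK R K I) := by
      intro k
      induction k with
      | zero => rw [pow_one]; exact hXS
      | succ n ih =>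
          rw [pow_succ]
          exact Submodule.mul_le.2 fun x hx y hy => hS.2 x (ih hx) y (hXS hy)
    have hstep1 : Submodule.span R {a' ^ (m + 1)} * toK R K I ≤ vOp (B ^ (m + 1)) := by
      have h1 : X ^ (m + 1) * toK R K I ≤ 1 :=
        Submodule.mul_le.2 fun x hx b hb => mem_dual'.1 (hXk m hx) b hb
      have hXpow : X ^ (m + 1) = Submodule.span R {a' ^ (m + 1)} * N ^ (m + 1) := by
        rw [hX, mul_pow, spanK_pow]
      have h2 : Submodule.span R {a' ^ (m + 1)} * toK R K I * (B * N) ^ (m + 1) ≤ B ^ (m + 1) := by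
        calc Submodule.span R {a' ^ (m + 1)} * toK R K I * (B * N) ^ (m + 1)
            = (Submodule.span R {a' ^ (m + 1)} * N ^ (m + 1) * toK R K I) * B ^ (m + 1) := by
              rw [mul_pow]; ring
          _ = (X ^ (m + 1) * toK R K I) * B ^ (m + 1) := by rw [hXpow]
          _ ≤ 1 * B ^ (m + 1) := mul_le_mul' h1 le_rfl
          _ = B ^ (m + 1) := one_mul _
      calc Submodule.span R {a' ^ (m + 1)} * toK R K I
          = Submodule.span R {a' ^ (m + 1)} * toK R K I * vOp ((B * N) ^ (m + 1)) := by
            rw [vOp_pow_eq_one hBN1, mul_one]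
        _ ≤ vOp (Submodule.span R {a' ^ (m + 1)} * toK R K I * (B * N) ^ (m + 1)) := mul_vOp_le _ _
        _ ≤ vOp (B ^ (m + 1)) := vOp_mono h2
    set s' : K := algebraMap R K s with hs'
    have he1 : Submodule.span R {s'} * B ^ m ≤ toK R K I := by
      have heq : Submodule.span R {s'} * B ^ m = toK R K (Ideal.span {s} * B₀ ^ m) := by
        rw [toK_mul, toK_span_singleton, toK_pow]
      rw [heq]
      exact toK_mono hL3
    have he2 : Submodule.span R {s' * a' ^ (m + 1)} * (B ^ m * N ^ m) ≤ vOp B := by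
      have hc1 : Submodule.span R {s' * a' ^ (m + 1)} * (B ^ m * N ^ m)
          = Submodule.span R {a' ^ (m + 1)} * (Submodule.span R {s'} * B ^ m) * N ^ m := by
        rw [← spanK_mul_spanK]; ring
      rw [hc1]
      calc Submodule.span R {a' ^ (m + 1)} * (Submodule.span R {s'} * B ^ m) * N ^ m
          ≤ Submodule.span R {a' ^ (m + 1)} * toK R K I * N ^ m :=
            mul_le_mul' (mul_le_mul' le_rfl he1) le_rfl
        _ ≤ vOp (B ^ (m + 1)) * N ^ m := mul_le_mul' hstep1 le_rfl
        _ ≤ vOp (B ^ (m + 1) * N ^ m) := by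
            rw [mul_comm (vOp (B ^ (m + 1))) (N ^ m), mul_comm (B ^ (m + 1)) (N ^ m)]
            exact mul_vOp_le _ _
        _ = vOp (B * (B * N) ^ m) := by
            rw [show B ^ (m + 1) * N ^ m = B * (B * N) ^ m by rw [mul_pow]; ring]
        _ = vOp (B * vOp ((B * N) ^ m)) := (vOp_mul_vOp _ _).symm
        _ = vOp B := by rw [vOp_pow_eq_one hBN1, mul_one]
    have hfin : s' * a' ^ (m + 1) ∈ toK R K P := by
      have hm1 : s' * a' ^ (m + 1) ∈ Submodule.span R {s' * a' ^ (m + 1)} * vOp ((B * N) ^ m) := by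
        refine Submodule.mem_span_singleton_mul.2 ⟨1, ?_, mul_one _⟩
        rw [vOp_pow_eq_one hBN1]
        exact one_mem_one'
      have hm2 : Submodule.span R {s' * a' ^ (m + 1)} * vOp ((B * N) ^ m) ≤ vOp (vOp B) := by
        calc Submodule.span R {s' * a' ^ (m + 1)} * vOp ((B * N) ^ m)
            ≤ vOp (Submodule.span R {s' * a' ^ (m + 1)} * (B * N) ^ m) := mul_vOp_le _ _
          _ = vOp (Submodule.span R {s' * a' ^ (m + 1)} * (B ^ m * N ^ m)) := by rw [mul_pow]
          _ ≤ vOp (vOp B) := vOp_mono he2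
      have hm3 : vOp B ≤ toK R K P := by
        have hv := vOp_le_tOp (J := B) (fun h => hB₀b (toK_eq_bot_iff.1 h))
          (Submodule.FG.map _ hB₀fg) (toK_mono hB₀P)
        rwa [htP] at hv
      exact hm3 (vOp_idem B ▸ hm2 hm1)
    have hPfin : s * a ^ (m + 1) ∈ P := by
      rw [← algebraMap_mem_toK_iff (K := K), map_mul, map_pow]
      exact hfin
    rcases hPp.mem_or_mem hPfin with h | h
    · exact hsP h
    · exact haP (hPp.mem_of_pow_mem _ h)
  · -- If no minimal prime is t-invertible then I⁻¹ is a ring.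
    intro hAll
    have hkey : ∀ x ∈ dual (toK R K I), ∀ b ∈ toK R K I, x * b ∈ toK R K I := by
      intro x hx b hb
      obtain ⟨b₀, hb₀, rfl⟩ := mem_toK'.1 hb
      have hxb : x * algebraMap R K b₀ ∈ (1 : Submodule R K) :=
        mem_dual'.1 hx _ (mem_toK'.2 ⟨b₀, hb₀, rfl⟩)
      obtain ⟨r, hr⟩ := Submodule.mem_one.1 hxb
      have hrI : r ∈ I := by
        rw [← hrad, ← Ideal.sInf_minimalPrimes]
        refine Ideal.mem_sInf.2 fun Q hQ => ?_
        have hQp : Q.IsPrime := hQ.1.1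
        obtain ⟨a, haJ, haP⟩ := SetLike.not_le_iff_exists.1 (hirr Q hQ)
        have hu : x * algebraMap R K a ∈ dual (toK R K Q) := by
          refine mem_dual'.2 fun y hy => ?_
          obtain ⟨p, hp, rfl⟩ := mem_toK'.1 hy
          have hapI : a * p ∈ I := by
            rw [← hrad, ← Ideal.sInf_minimalPrimes]
            refine Ideal.mem_sInf.2 fun Q' hQ' => ?_
            by_cases hQQ : Q' = Q
            · subst hQQ
              exact Q'.mul_mem_left a hp
            · have haQ' : a ∈ Q' :=
                Ideal.mem_sInf.1 haJ ⟨hQ', fun hmem => hQQ (Set.mem_singleton_iff.1 hmem)⟩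
              exact Q'.mul_mem_right p haQ'
          have := mem_dual'.1 hx (algebraMap R K (a * p)) (mem_toK'.2 ⟨a * p, hapI, rfl⟩)
          rwa [map_mul, show x * (algebraMap R K a * algebraMap R K p)
            = x * algebraMap R K a * algebraMap R K p by ring] at this
        have hb₀Q : b₀ ∈ Q := hQ.1.2 hb₀
        have hin : (x * algebraMap R K a) * algebraMap R K b₀ ∈ toK R K Q := by
          by_contra hout
          exact hAll Q hQ (tInvertible_of_not_endo hR Q hQp hu hb₀Q hout)
        have hmm : algebraMap R K (a * r) = (x * algebraMap R K a) * algebraMap R K b₀ := by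
          rw [map_mul, hr]
          ring
        have har : a * r ∈ Q := algebraMap_mem_toK_iff.1
          (show algebraMap R K (a * r) ∈ toK R K Q by rw [hmm]; exact hin)
        exact (hQp.mem_or_mem har).resolve_left haP
      rw [← hr]
      exact mem_toK'.2 ⟨r, hrI, rfl⟩
    refine ⟨mem_dual'.2 fun y hy => by rw [one_mul]; exact (toK_le_one I) hy, ?_⟩
    intro x hx y hy
    refine mem_dual'.2 fun b hb => ?_
    have h1 : y * b ∈ toK R K I := hkey y hy b hb
    have h2 := mem_dual'.1 hx _ h1
    rwa [show x * (y * b) = x * y * b by ring] at h2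


end Statements

end

end PVMDPaper
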